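/- For all α > 0 and β > 0, every eigenvalue λ ∈ ℂ of the iteration matrix Γ_{α,β} = M_{α,β}⁻¹ N_{α,β} (regarded as a complex matrix) satisfies |λ| < 1; equivalently, the spectral radius of Γ_{α,β} is strictly less than 1. -/

import Mathlib

open Matrix

private lemma mulVec_ofReal_re' {p q : Type*} [Fintype q] (K : Matrix p q ℝ) (v : q → ℂ) (i : p) :
    ((K.map Complex.ofReal *ᵥ v) i).re = (K *ᵥ fun j => (v j).re) i := by
  simp [mulVec, dotProduct, Complex.re_sum, Complex.mul_re]

private lemma mulVec_ofReal_im' {p q : Type*} [Fintype q] (K : Matrix p q ℝ) (v : q → ℂ) (i : p) :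
    ((K.map Complex.ofReal *ᵥ v) i).im = (K *ᵥ fun j => (v j).im) i := by
  simp [mulVec, dotProduct, Complex.im_sum, Complex.mul_im]

private lemma quad_re' {p : Type*} [Fintype p] (K : Matrix p p ℝ) (v : p → ℂ) :
    (star v ⬝ᵥ (K.map Complex.ofReal *ᵥ v)).re
      = (fun j => (v j).re) ⬝ᵥ (K *ᵥ fun j => (v j).re)
        + (fun j => (v j).im) ⬝ᵥ (K *ᵥ fun j => (v j).im) := by
  simp only [dotProduct, mulVec, Complex.re_sum, Pi.star_apply, ← Finset.sum_add_distrib,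
    Finset.mul_sum]
  refine Finset.sum_congr rfl fun i _ => ?_
  refine Finset.sum_congr rfl fun j _ => ?_
  simp only [Matrix.map_apply, RCLike.star_def, Complex.mul_re, Complex.mul_im,
    Complex.conj_re, Complex.conj_im, Complex.ofReal_re, Complex.ofReal_im]
  ring

private lemma diag_quad' {p : Type*} [Fintype p] [DecidableEq p] (d : p → ℝ) (v : p → ℂ) :
    star v ⬝ᵥ ((diagonal d).map Complex.ofReal *ᵥ v)
      = ((∑ i, d i * Complex.normSq (v i) : ℝ) : ℂ) := by
  rw [Matrix.diagonal_map (by simp)]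
  push_cast
  simp only [dotProduct, mulVec_diagonal, Pi.star_apply, RCLike.star_def]
  refine Finset.sum_congr rfl fun i _ => ?_
  rw [show (starRingEnd ℂ) (v i) * (↑(d i) * v i)
      = ↑(d i) * (v i * (starRingEnd ℂ) (v i)) by ring, Complex.mul_conj]

theorem spectral_radius_lt_one
    (n m : ℕ) (hn : 0 < n) (hm : 0 < m) (hmn : m ≤ n)
    (A : Matrix (Fin n) (Fin n) ℝ) (B : Matrix (Fin m) (Fin n) ℝ)
    (C : Matrix (Fin m) (Fin m) ℝ)
    (hA : A.PosDef) (hC : C.PosSemidef) (hB : B.rank = m)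
    (α β : ℝ) (hα : 0 < α) (hβ : 0 < β)
    (M N : Matrix (Fin n ⊕ Fin m) (Fin n ⊕ Fin m) ℝ)
    (hM : M = (1/2 : ℝ) • Matrix.fromBlocks
      (α • (1 : Matrix (Fin n) (Fin n) ℝ) + A) Bᵀ (-B)
      (β • (1 : Matrix (Fin m) (Fin m) ℝ) + C))
    (hN : N = (1/2 : ℝ) • Matrix.fromBlocks
      (α • (1 : Matrix (Fin n) (Fin n) ℝ) - A) (-Bᵀ) B
      (β • (1 : Matrix (Fin m) (Fin m) ℝ) - C)) :
    ∀ lam : ℂ, ∀ u : Fin n ⊕ Fin m → ℂ, u ≠ 0 →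
      ((M⁻¹ * N).map Complex.ofReal) *ᵥ u = lam • u →
      ‖lam‖ < 1 := by
  intro lam u hu hequ
  set d : Fin n ⊕ Fin m → ℝ := Sum.elim (fun _ => α) (fun _ => β) with hd
  have hdpos : ∀ i, 0 < d i := by rintro (i | i) <;> simpa [hd] using (by assumption)
  set Dm : Matrix (Fin n ⊕ Fin m) (Fin n ⊕ Fin m) ℝ := diagonal d with hDm
  set Hm : Matrix (Fin n ⊕ Fin m) (Fin n ⊕ Fin m) ℝ := fromBlocks A Bᵀ (-B) C with hHm
  -- block algebra
  have hadd : M + N = Dm := by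
    subst hM hN
    ext i j
    rcases i with i | i <;> rcases j with j | j <;>
      simp [hDm, Matrix.fromBlocks, Matrix.diagonal_apply, Matrix.one_apply, hd] <;>
      (try split_ifs) <;> ring
  have hsub : M - N = Hm := by
    subst hM hN
    ext i j
    rcases i with i | i <;> rcases j with j | j <;>
      simp [hHm, Matrix.fromBlocks, Matrix.one_apply] <;>
      (try split_ifs) <;> ring
  -- real quadratic facts
  have hAq : ∀ a : Fin n → ℝ, a ≠ 0 → 0 < a ⬝ᵥ (A *ᵥ a) := fun a ha => by
    simpa using hA.re_dotProduct_pos ha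
  have hAq0 : ∀ a : Fin n → ℝ, 0 ≤ a ⬝ᵥ (A *ᵥ a) := fun a => by
    simpa using hA.posSemidef.re_dotProduct_nonneg a
  have hCq0 : ∀ b : Fin m → ℝ, 0 ≤ b ⬝ᵥ (C *ᵥ b) := fun b => by
    simpa using hC.re_dotProduct_nonneg b
  have hHq : ∀ (a : Fin n → ℝ) (b : Fin m → ℝ),
      Sum.elim a b ⬝ᵥ (Hm *ᵥ Sum.elim a b) = a ⬝ᵥ (A *ᵥ a) + b ⬝ᵥ (C *ᵥ b) := by
    intro a b
    rw [hHm, fromBlocks_mulVec, sumElim_dotProduct_sumElim]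
    have h1 : a ⬝ᵥ (Bᵀ *ᵥ b) = b ⬝ᵥ (B *ᵥ a) := by
      rw [dotProduct_mulVec, vecMul_transpose, dotProduct_comm]
    simp [dotProduct_add, h1, neg_mulVec]
  have hHq0 : ∀ v : Fin n ⊕ Fin m → ℝ, 0 ≤ v ⬝ᵥ (Hm *ᵥ v) := fun v => by
    rw [← Sum.elim_comp_inl_inr v, hHq]
    exact add_nonneg (hAq0 _) (hCq0 _)
  have hDq : ∀ v : Fin n ⊕ Fin m → ℝ, v ≠ 0 → 0 < v ⬝ᵥ (Dm *ᵥ v) := by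
    intro v hv
    have h : v ⬝ᵥ (Dm *ᵥ v) = ∑ i, d i * (v i) ^ 2 := by
      simp only [hDm, dotProduct, mulVec_diagonal]
      exact Finset.sum_congr rfl fun i _ => by ring
    rw [h]
    obtain ⟨i, hi⟩ := Function.ne_iff.mp hv
    exact Finset.sum_pos' (fun j _ => mul_nonneg (hdpos j).le (sq_nonneg _))
      ⟨i, Finset.mem_univ i, mul_pos (hdpos i) (sq_pos_of_ne_zero hi)⟩
  -- M is invertible
  have hMdet : IsUnit M.det := by
    rw [isUnit_iff_ne_zero]
    intro hdet
    obtain ⟨v, hv0, hv⟩ := Matrix.exists_mulVec_eq_zero_iff.mpr hdet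
    have h2 : v ⬝ᵥ (Dm *ᵥ v) + v ⬝ᵥ (Hm *ᵥ v) = 2 * (v ⬝ᵥ (M *ᵥ v)) := by
      rw [← hadd, ← hsub, add_mulVec, sub_mulVec, dotProduct_add, dotProduct_sub]
      ring
    rw [hv, dotProduct_zero, mul_zero] at h2
    have := hDq v hv0
    have := hHq0 v
    linarith
  -- transfer eigen equation
  set Mc : Matrix (Fin n ⊕ Fin m) (Fin n ⊕ Fin m) ℂ := M.map Complex.ofReal with hMc
  set Nc : Matrix (Fin n ⊕ Fin m) (Fin n ⊕ Fin m) ℂ := N.map Complex.ofReal with hNc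
  have hmapmul : Mc * (M⁻¹ * N).map Complex.ofReal = Nc := by
    rw [hMc, hNc, show (Complex.ofReal : ℝ → ℂ) = ⇑Complex.ofRealHom from rfl,
      ← Matrix.map_mul, ← mul_assoc, Matrix.mul_nonsing_inv M hMdet, one_mul]
  have hNu : Nc *ᵥ u = lam • (Mc *ᵥ u) := by
    calc Nc *ᵥ u = Mc *ᵥ ((M⁻¹ * N).map Complex.ofReal *ᵥ u) := by
          rw [mulVec_mulVec, hmapmul]
      _ = Mc *ᵥ (lam • u) := by rw [hequ]
      _ = lam • (Mc *ᵥ u) := mulVec_smul _ _ _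
  have hDu : Dm.map Complex.ofReal *ᵥ u = (1 + lam) • (Mc *ᵥ u) := by
    rw [← hadd, Matrix.map_add _ (by push_cast; exact fun _ _ => rfl), add_mulVec, ← hMc, hNu,
      add_smul, one_smul]
  have hHu : Hm.map Complex.ofReal *ᵥ u = (1 - lam) • (Mc *ᵥ u) := by
    rw [← hsub, Matrix.map_sub _ (by push_cast; exact fun _ _ => rfl), sub_mulVec, ← hMc, hNu,
      sub_smul, one_smul]
  set s : ℂ := star u ⬝ᵥ (Mc *ᵥ u) with hs
  set c : ℝ := ∑ i, d i * Complex.normSq (u i) with hc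
  have hcpos : 0 < c := by
    obtain ⟨i, hi⟩ := Function.ne_iff.mp hu
    exact Finset.sum_pos' (fun j _ => mul_nonneg (hdpos j).le (Complex.normSq_nonneg _))
      ⟨i, Finset.mem_univ i, mul_pos (hdpos i) (Complex.normSq_pos.mpr hi)⟩
  have hp : (c : ℂ) = (1 + lam) * s := by
    have h1 := congrArg (fun w => star u ⬝ᵥ w) hDu
    simp only [dotProduct_smul, smul_eq_mul] at h1
    rw [hDm, diag_quad' d u] at h1
    exact h1
  set q : ℂ := star u ⬝ᵥ (Hm.map Complex.ofReal *ᵥ u) with hqdef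
  have hq : q = (1 - lam) * s := by
    have h1 := congrArg (fun w => star u ⬝ᵥ w) hHu
    simp only [dotProduct_smul, smul_eq_mul] at h1
    exact h1
  have hqre : 0 ≤ q.re := by
    rw [hqdef, quad_re']
    exact add_nonneg (hHq0 _) (hHq0 _)
  have hlam1 : (1 + lam) ≠ 0 := by
    intro h
    rw [h, zero_mul] at hp
    exact_mod_cast hcpos.ne' (by exact_mod_cast hp)
  have hs0 : s ≠ 0 := by
    intro h
    rw [h, mul_zero] at hp
    exact_mod_cast hcpos.ne' (by exact_mod_cast hp)
  have hkey : q.re * c = (1 - Complex.normSq lam) * Complex.normSq s := by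
    have h1 : q * (c : ℂ)
        = ((1 - lam) * (starRingEnd ℂ) (1 + lam)) * ((Complex.normSq s : ℝ) : ℂ) := by
      rw [hq, show ((c : ℝ) : ℂ) = (starRingEnd ℂ) ((1 + lam) * s) from by
        rw [← hp, Complex.conj_ofReal], _root_.map_mul, ← Complex.mul_conj]
      ring
    have h2 := congrArg Complex.re h1
    simp only [Complex.mul_re, Complex.ofReal_re, Complex.ofReal_im, mul_zero, sub_zero] at h2
    rw [h2]
    congr 1
    simp [Complex.mul_re, Complex.normSq_apply, Complex.sub_re, Complex.add_re,
      Complex.sub_im, Complex.add_im, Complex.conj_re, Complex.conj_im]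
    ring
  have hsnsq : 0 < Complex.normSq s := Complex.normSq_pos.mpr hs0
  rcases hqre.lt_or_eq with hpos | hzero
  · -- q.re > 0 : conclude
    have h1 : 0 < (1 - Complex.normSq lam) * Complex.normSq s := by
      rw [← hkey]; exact mul_pos hpos hcpos
    have h2 : Complex.normSq lam < 1 := by nlinarith
    have h3 := Complex.sq_norm lam
    nlinarith [norm_nonneg lam]
  · -- q.re = 0 : contradiction
    exfalso
    set xre : Fin n → ℝ := fun i => (u (Sum.inl i)).re with hxre
    set xim : Fin n → ℝ := fun i => (u (Sum.inl i)).im with hxim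
    have hsplit_re : (fun j => (u j).re) = Sum.elim xre (fun j => (u (Sum.inr j)).re) := by
      funext j; rcases j with j | j <;> rfl
    have hsplit_im : (fun j => (u j).im) = Sum.elim xim (fun j => (u (Sum.inr j)).im) := by
      funext j; rcases j with j | j <;> rfl
    have hq0 : (fun j => (u j).re) ⬝ᵥ (Hm *ᵥ fun j => (u j).re)
        + (fun j => (u j).im) ⬝ᵥ (Hm *ᵥ fun j => (u j).im) = 0 := by
      rw [← quad_re', ← hqdef, ← hzero]
    rw [hsplit_re, hsplit_im, hHq, hHq] at hq0
    have hx0 : ∀ i, u (Sum.inl i) = 0 := by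
      have h1 : xre ⬝ᵥ (A *ᵥ xre) = 0 := by
        have := hAq0 xre
        have := hCq0 (fun j => (u (Sum.inr j)).re)
        have := hAq0 xim
        have := hCq0 (fun j => (u (Sum.inr j)).im)
        linarith
      have h2 : xim ⬝ᵥ (A *ᵥ xim) = 0 := by
        have := hAq0 xim
        have := hAq0 xre
        have := hCq0 (fun j => (u (Sum.inr j)).re)
        have := hCq0 (fun j => (u (Sum.inr j)).im)
        linarith
      have hre0 : xre = 0 := by
        by_contra h; exact (hAq xre h).ne' h1
      have him0 : xim = 0 := by
        by_contra h; exact (hAq xim h).ne' h2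
      intro i
      have e1 : (u (Sum.inl i)).re = 0 := congrFun hre0 i
      have e2 : (u (Sum.inl i)).im = 0 := congrFun him0 i
      exact Complex.ext e1 e2
    -- (Mc *ᵥ u) vanishes on the inl block
    have hMcu0 : ∀ i, (Mc *ᵥ u) (Sum.inl i) = 0 := by
      intro i
      have h1 := congrFun hDu (Sum.inl i)
      have h2 : (Dm.map Complex.ofReal *ᵥ u) (Sum.inl i) = 0 := by
        rw [hDm, Matrix.diagonal_map (by simp), mulVec_diagonal, hx0 i, mul_zero]
      rw [h2] at h1
      have := h1.symm
      simp only [Pi.smul_apply, smul_eq_mul] at this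
      exact (mul_eq_zero.mp this).resolve_left hlam1
    -- hence Bᵀ *ᵥ y = 0 over ℂ
    have hBty : ∀ i, (Bᵀ.map Complex.ofReal *ᵥ fun j => u (Sum.inr j)) i = 0 := by
      intro i
      have h1 := congrFun hHu (Sum.inl i)
      simp only [Pi.smul_apply, smul_eq_mul] at h1
      rw [hMcu0 i, mul_zero] at h1
      have h2 : (Hm.map Complex.ofReal *ᵥ u) (Sum.inl i)
          = (A.map Complex.ofReal *ᵥ fun j => u (Sum.inl j)) i
            + (Bᵀ.map Complex.ofReal *ᵥ fun j => u (Sum.inr j)) i := by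
        rw [hHm, ← Sum.elim_comp_inl_inr u, fromBlocks_map, fromBlocks_mulVec]
        simp only [Sum.elim_inl, Pi.add_apply]
        rfl
      rw [h2] at h1
      have h3 : (A.map Complex.ofReal *ᵥ fun j => u (Sum.inl j)) i = 0 := by
        have : (fun j => u (Sum.inl j)) = (0 : Fin n → ℂ) := funext hx0
        rw [this, mulVec_zero]; rfl
      rw [h3, zero_add] at h1
      exact h1
    -- full row rank of B gives y = 0
    have hBt : ∀ w : Fin m → ℝ, Bᵀ *ᵥ w = 0 → w = 0 := by
      have hrange : LinearMap.range B.mulVecLin = ⊤ := by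
        apply Submodule.eq_top_of_finrank_eq
        rw [show Module.finrank ℝ ↥(LinearMap.range B.mulVecLin) = B.rank from rfl, hB,
          Module.finrank_fin_fun]
      intro w hw
      obtain ⟨z, hz⟩ := LinearMap.range_eq_top.mp hrange w
      rw [Matrix.mulVecLin_apply] at hz
      have hww : w ⬝ᵥ w = 0 := by
        calc w ⬝ᵥ w = w ⬝ᵥ (B *ᵥ z) := by rw [hz]
          _ = 0 := by rw [dotProduct_mulVec, ← mulVec_transpose, hw, zero_dotProduct]
      exact dotProduct_self_eq_zero.mp hww
    have hyre : Bᵀ *ᵥ (fun j => (u (Sum.inr j)).re) = 0 := by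
      funext i
      have h1 := mulVec_ofReal_re' Bᵀ (fun j => u (Sum.inr j)) i
      rw [hBty i] at h1
      simpa using h1.symm
    have hyim : Bᵀ *ᵥ (fun j => (u (Sum.inr j)).im) = 0 := by
      funext i
      have h1 := mulVec_ofReal_im' Bᵀ (fun j => u (Sum.inr j)) i
      rw [hBty i] at h1
      simpa using h1.symm
    have hy0 : ∀ j, u (Sum.inr j) = 0 := fun j =>
      Complex.ext (congrFun (hBt _ hyre) j) (congrFun (hBt _ hyim) j)
    apply hu
    funext j
    rcases j with j | j
    · exact hx0 j
    · exact hy0 j
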